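/- Every (3)-sofic monoid embeds into a sofic group: if a monoid M is (3)-sofic, then there exist a sofic group G and an injective multiplicative homomorphism M → G. -/

import Mathlib

set_option linter.unusedSectionVars false
set_option linter.unusedVariables false
set_option maxHeartbeats 1000000

/-- Normalized Hamming distance between two self-maps of a (finite) type. -/
noncomputable def dHam {X : Type} (f g : X → X) : ℝ :=
  (({x : X | f x ≠ g x}).ncard : ℝ) / (Nat.card X)

/-- A `(K, ε)`-action of a monoid `M` on a type `X` (intended finite and nonempty). -/
def IsKEAction {M : Type*} [Monoid M] (K : Finset M) (ε : ℝ) {X : Type}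
    (ψ : M → X → X) : Prop :=
  (∀ s ∈ K, ∀ t ∈ K, s * t ∈ K → dHam (ψ (s * t)) (ψ s ∘ ψ t) ≤ ε) ∧
  ((1 : M) ∈ K → dHam (ψ 1) id ≤ ε) ∧
  (∀ s ∈ K, ∀ t ∈ K, s ≠ t → 1 - ε ≤ dHam (ψ s) (ψ t))

/-- A group is sofic if for every finite `K ⊆ G` and every `ε > 0` it admits a
`(K, ε)`-action on some nonempty finite set. -/
def IsSoficGroup (G : Type*) [Group G] : Prop :=
  ∀ (K : Finset G) (ε : ℝ), 0 < ε →
    ∃ (X : Type), Finite X ∧ Nonempty X ∧ ∃ ψ : G → X → X, IsKEAction K ε ψ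

/-- A monoid is (3)-sofic if for every finite `K ⊆ M` and every `ε > 0` it admits a
`(K, ε)`-action on some nonempty finite set `X` such that the uniform probability
measure on `X` is approximately invariant: for every `s ∈ K` and every `E ⊆ X`,
`| |E| - |ψ(s)⁻¹(E)| | ≤ ε * |X|`. -/
def IsSofic3 (M : Type*) [Monoid M] : Prop :=
  ∀ (K : Finset M) (ε : ℝ), 0 < ε →
    ∃ (X : Type), Finite X ∧ Nonempty X ∧ ∃ ψ : M → X → X, IsKEAction K ε ψ ∧
      ∀ s ∈ K, ∀ E : Set X,
        |(E.ncard : ℝ) - ((ψ s ⁻¹' E).ncard : ℝ)| ≤ ε * (Nat.card X : ℝ)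

section basic

variable {X : Type} [Finite X]

lemma dHam_nonneg (f g : X → X) : 0 ≤ dHam f g := by
  unfold dHam; positivity

lemma dHam_comm (f g : X → X) : dHam f g = dHam g f := by
  unfold dHam
  have : {x : X | f x ≠ g x} = {x : X | g x ≠ f x} := by ext x; exact ne_comm
  rw [this]

lemma dHam_self (f : X → X) : dHam f f = 0 := by
  unfold dHam; simp

lemma ncard_ne_le (f g : X → X) : ({x : X | f x ≠ g x}).ncard ≤ Nat.card X := by
  exact (Set.ncard_le_ncard (Set.subset_univ _) Set.finite_univ).trans
      (le_of_eq (Set.ncard_univ X))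

lemma dHam_le_one (f g : X → X) : dHam f g ≤ 1 := by
  unfold dHam
  apply div_le_one_of_le₀
  · exact_mod_cast ncard_ne_le f g
  · positivity

lemma dHam_triangle (f g h : X → X) : dHam f h ≤ dHam f g + dHam g h := by
  unfold dHam
  rw [← add_div]
  apply div_le_div_of_nonneg_right ?_ (Nat.cast_nonneg _)
  have hsub : {x : X | f x ≠ h x} ⊆ {x : X | f x ≠ g x} ∪ {x : X | g x ≠ h x} := by
    intro x hx
    by_cases hfg : f x = g x
    · right; simpa [Set.mem_setOf_eq, hfg] using hx
    · left; exact hfg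
  have h1 : ({x : X | f x ≠ h x}).ncard ≤
      ({x : X | f x ≠ g x}).ncard + ({x : X | g x ≠ h x}).ncard :=
    (Set.ncard_le_ncard hsub (Set.toFinite _)).trans (Set.ncard_union_le _ _)
  exact_mod_cast h1

lemma dHam_comp_left (h f g : X → X) :
    dHam (fun x => h (f x)) (fun x => h (g x)) ≤ dHam f g := by
  unfold dHam
  apply div_le_div_of_nonneg_right ?_ (Nat.cast_nonneg _)
  have hsub : {x : X | h (f x) ≠ h (g x)} ⊆ {x : X | f x ≠ g x} := by
    intro x hx hfg
    exact hx (congrArg h hfg)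
  exact_mod_cast Set.ncard_le_ncard hsub (Set.toFinite _)

lemma dHam_comp_right_equiv (e : X ≃ X) (f g : X → X) :
    dHam (fun x => f (e x)) (fun x => g (e x)) = dHam f g := by
  unfold dHam
  congr 2
  have : {x : X | f (e x) ≠ g (e x)} = e ⁻¹' {x : X | f x ≠ g x} := rfl
  rw [this, ← Equiv.image_symm_eq_preimage,
    Set.ncard_image_of_injective _ e.symm.injective]

variable {X : Type} [Finite X]

lemma dHam_comp_right_meas [Nonempty X] (h f g : X → X) {ε : ℝ}
    (hm : ∀ E : Set X, |(E.ncard : ℝ) - ((h ⁻¹' E).ncard : ℝ)| ≤ ε * (Nat.card X : ℝ)) :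
    dHam (fun x => f (h x)) (fun x => g (h x)) ≤ dHam f g + ε := by
  have hc : (0 : ℝ) < (Nat.card X : ℝ) := by exact_mod_cast Nat.card_pos
  have hD : {x : X | f (h x) ≠ g (h x)} = h ⁻¹' {x : X | f x ≠ g x} := rfl
  have h1 : ((h ⁻¹' {x : X | f x ≠ g x}).ncard : ℝ) ≤
      (({x : X | f x ≠ g x}).ncard : ℝ) + ε * (Nat.card X : ℝ) := by
    have := abs_le.mp (hm {x : X | f x ≠ g x})
    linarith [this.1]
  unfold dHam
  rw [hD]
  have heq : (({x : X | f x ≠ g x}).ncard : ℝ) / (Nat.card X : ℝ) + ε =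
      ((({x : X | f x ≠ g x}).ncard : ℝ) + ε * (Nat.card X : ℝ)) / (Nat.card X : ℝ) := by
    field_simp
  rw [heq]
  exact div_le_div_of_nonneg_right h1 hc.le

lemma dHam_perm_left_cancel (a : Equiv.Perm X) (f g : X → X) :
    dHam (fun x => a (f x)) (fun x => a (g x)) = dHam f g := by
  unfold dHam
  congr 2
  have : {x : X | a (f x) ≠ a (g x)} = {x : X | f x ≠ g x} := by
    ext x
    simp [Set.mem_setOf_eq, EmbeddingLike.apply_eq_iff_eq]
  rw [this]

lemma dHam_inv_mul (a b : Equiv.Perm X) : dHam ⇑(a⁻¹ * b) id = dHam ⇑a ⇑b := by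
  unfold dHam
  congr 2
  have : {x : X | (a⁻¹ * b) x ≠ id x} = {x : X | a x ≠ b x} := by
    ext x
    simp only [Set.mem_setOf_eq, Equiv.Perm.mul_apply, id_eq]
    constructor
    · intro hx hab
      exact hx (by rw [← hab]; exact a.symm_apply_apply x)
    · intro hx hab
      apply hx
      have := congrArg a hab
      simpa using this.symm
  rw [this]


variable {X : Type} [Finite X]

lemma exists_perm_close [Nonempty X] (f : X → X) {ε : ℝ}
    (hm : ∀ E : Set X, |(E.ncard : ℝ) - ((f ⁻¹' E).ncard : ℝ)| ≤ ε * (Nat.card X : ℝ)) :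
    ∃ σ : Equiv.Perm X, dHam f ⇑σ ≤ ε := by
  classical
  have hc : (0 : ℝ) < (Nat.card X : ℝ) := by exact_mod_cast Nat.card_pos
  set T : Set X := Set.range f with hT
  -- a section g : T → X with f (g y) = y
  have hsec : ∀ y : T, ∃ x : X, f x = (y : X) := fun y => y.2
  choose g hg using hsec
  have hginj : Function.Injective g := by
    intro y1 y2 h
    apply Subtype.ext
    rw [← hg y1, ← hg y2, h]
  set S : Set X := Set.range g with hS
  let eST : T ≃ ↥S := Equiv.ofInjective g hginj
  have hcardST : Nat.card ↥S = Nat.card ↥T := Nat.card_congr eST.symm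
  have hcompl : Nat.card ↥(Sᶜ) = Nat.card ↥(Tᶜ) := by
    have h1 := Set.ncard_add_ncard_compl S
    have h2 := Set.ncard_add_ncard_compl T
    have := Nat.card_coe_set_eq S
    have := Nat.card_coe_set_eq T
    have := Nat.card_coe_set_eq Sᶜ
    have := Nat.card_coe_set_eq Tᶜ
    omega
  obtain ⟨e'⟩ : Nonempty (↥(Sᶜ) ≃ ↥(Tᶜ)) := Finite.card_eq.mp hcompl
  let σ : Equiv.Perm X :=
    (Equiv.Set.sumCompl S).symm.trans ((Equiv.sumCongr (eST.symm) e').trans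
      (Equiv.Set.sumCompl T))
  have hσS : ∀ x (hx : x ∈ S), σ x = f x := by
    intro x hx
    obtain ⟨y, hy⟩ := hx
    have hmem : x ∈ S := ⟨y, hy⟩
    have h1 : (Equiv.Set.sumCompl S).symm x = Sum.inl ⟨x, hmem⟩ :=
      Equiv.Set.sumCompl_symm_apply_of_mem hmem
    have h2' : eST.symm ⟨x, hmem⟩ = y := by
      have heq : eST y = ⟨x, hmem⟩ := by
        apply Subtype.ext
        simp only [eST, Equiv.ofInjective_apply]
        exact hy
      rw [← heq, Equiv.symm_apply_apply]
    simp only [σ, Equiv.trans_apply, h1, Equiv.sumCongr_apply, Sum.map_inl, h2',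
      Equiv.Set.sumCompl_apply_inl]
    rw [← hy, hg]
  -- the disagreement set is inside Sᶜ
  have hsub : {x : X | f x ≠ σ x} ⊆ Sᶜ := by
    intro x hx hxS
    exact hx ((hσS x hxS).symm)
  -- |Tᶜ| ≤ ε |X|
  have hTc : ((Tᶜ : Set X).ncard : ℝ) ≤ ε * (Nat.card X : ℝ) := by
    have h0 : f ⁻¹' (Tᶜ) = ∅ := by
      ext x
      simp only [Set.mem_preimage, Set.mem_compl_iff, Set.mem_empty_iff_false, iff_false,
        not_not]
      exact ⟨x, rfl⟩
    have habs := hm Tᶜ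
    rw [h0] at habs
    simp only [Set.ncard_empty, Nat.cast_zero, sub_zero] at habs
    exact (le_abs_self _).trans habs
  have hScTc : ((Sᶜ : Set X).ncard : ℝ) = ((Tᶜ : Set X).ncard : ℝ) := by
    have := Nat.card_coe_set_eq (Sᶜ : Set X)
    have := Nat.card_coe_set_eq (Tᶜ : Set X)
    exact_mod_cast by omega
  refine ⟨σ, ?_⟩
  unfold dHam
  rw [div_le_iff₀ hc]
  calc (({x : X | f x ≠ σ x}).ncard : ℝ) ≤ ((Sᶜ : Set X).ncard : ℝ) := by
        exact_mod_cast Set.ncard_le_ncard hsub (Set.toFinite _)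
    _ = ((Tᶜ : Set X).ncard : ℝ) := hScTc
    _ ≤ ε * (Nat.card X : ℝ) := hTc


variable {X : Type} [Finite X]

lemma dHam_pi [Nonempty X] (f g : X → X) (n : ℕ) :
    dHam (fun v : Fin n → X => f ∘ v) (fun v : Fin n → X => g ∘ v)
      = 1 - (1 - dHam f g) ^ n := by
  classical
  have hc : (0 : ℝ) < (Nat.card X : ℝ) := by exact_mod_cast Nat.card_pos
  have hAgree : {v : Fin n → X | f ∘ v ≠ g ∘ v}ᶜ
      = {v : Fin n → X | ∀ k, v k ∈ {x : X | f x = g x}} := by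
    ext v
    simp only [Set.mem_compl_iff, Set.mem_setOf_eq, not_not, funext_iff, Function.comp_apply]
  have hcardAgree : ({v : Fin n → X | ∀ k, v k ∈ {x : X | f x = g x}}).ncard
      = ({x : X | f x = g x}).ncard ^ n := by
    rw [← Nat.card_coe_set_eq]
    have e : {v : Fin n → X | ∀ k, v k ∈ {x : X | f x = g x}} ≃ (Fin n → {x : X | f x = g x}) :=
      { toFun := fun v => fun k => ⟨v.1 k, v.2 k⟩
        invFun := fun w => ⟨fun k => (w k : X), fun k => (w k).2⟩
        left_inv := fun v => rfl
        right_inv := fun w => rfl }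
    rw [Nat.card_congr e, Nat.card_fun, Nat.card_coe_set_eq]
    simp
  have htot : Nat.card (Fin n → X) = Nat.card X ^ n := by
    rw [Nat.card_fun]; simp
  have hsplit := Set.ncard_add_ncard_compl
    {v : Fin n → X | f ∘ v ≠ g ∘ v}
  rw [hAgree, hcardAgree, htot] at hsplit
  have hDA : {x : X | f x ≠ g x} = {x : X | f x = g x}ᶜ := by ext x; simp
  have hAD := Set.ncard_add_ncard_compl {x : X | f x = g x}
  rw [← hDA] at hAD
  -- real versions
  have hsplitR : (({v : Fin n → X | f ∘ v ≠ g ∘ v}).ncard : ℝ)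
      + (({x : X | f x = g x}).ncard : ℝ) ^ n = (Nat.card X : ℝ) ^ n := by
    exact_mod_cast hsplit
  have hADR : (({x : X | f x = g x}).ncard : ℝ) + (({x : X | f x ≠ g x}).ncard : ℝ)
      = (Nat.card X : ℝ) := by exact_mod_cast hAD
  unfold dHam
  rw [htot]
  push_cast
  rw [div_eq_iff (by positivity)]
  have h1 : (1 : ℝ) - (({x : X | f x ≠ g x}).ncard : ℝ) / (Nat.card X : ℝ)
      = (({x : X | f x = g x}).ncard : ℝ) / (Nat.card X : ℝ) := by
    field_simp
    linarith
  rw [h1, div_pow]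
  have hcn : (0:ℝ) < (Nat.card X : ℝ) ^ n := by positivity
  field_simp
  linarith

lemma dHam_congr {f g f' g' : X → X} (hf : ∀ x, f x = f' x) (hg : ∀ x, g x = g' x) :
    dHam f g = dHam f' g' := by
  have h1 : f = f' := funext hf
  have h2 : g = g' := funext hg
  rw [h1, h2]

lemma dHam_perm_mul (a b : Equiv.Perm X) :
    dHam ⇑(a * b) id ≤ dHam ⇑a id + dHam ⇑b id := by
  have h1 : dHam ⇑(a * b) ⇑b + dHam ⇑b id = dHam ⇑a id + dHam ⇑b id := by
    congr 1
    have := dHam_comp_right_equiv b ⇑a id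
    calc dHam ⇑(a * b) ⇑b = dHam (fun x => a (b x)) (fun x => id (b x)) :=
          dHam_congr (fun x => rfl) (fun x => rfl)
      _ = dHam ⇑a id := this
  calc dHam ⇑(a * b) id ≤ dHam ⇑(a * b) ⇑b + dHam ⇑b id := dHam_triangle _ _ _
    _ = dHam ⇑a id + dHam ⇑b id := h1

lemma dHam_perm_inv (a : Equiv.Perm X) : dHam ⇑a⁻¹ id = dHam ⇑a id := by
  have h := dHam_comp_right_equiv a ⇑a⁻¹ id
  have h2 : dHam (fun x => a⁻¹ (a x)) (fun x => id (a x)) = dHam (id : X → X) ⇑a :=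
    dHam_congr (fun x => a.symm_apply_apply x) (fun x => rfl)
  rw [h2] at h
  rw [← h, dHam_comm]

lemma dHam_perm_conj (a g : Equiv.Perm X) : dHam ⇑(a * g * a⁻¹) id = dHam ⇑g id := by
  have h := dHam_comp_right_equiv a ⇑(a * g * a⁻¹) id
  have h2 : dHam (fun x => (a * g * a⁻¹) (a x)) (fun x => id (a x))
      = dHam (fun x => a (g x)) (fun x => a (id x)) := by
    apply dHam_congr
    · intro x
      show a (g (a⁻¹ (a x))) = a (g x)
      congr 1
      congr 1
      exact a.symm_apply_apply x
    · intro x; rfl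
  rw [h2, dHam_perm_left_cancel] at h
  exact h.symm


end basic
lemma one_sub_pow_le_nmul {d : ℝ} (n : ℕ) (h0 : 0 ≤ d) (h1 : d ≤ 1) :
    1 - (1 - d) ^ n ≤ n * d := by
  have h := one_add_mul_le_pow (a := -d) (by linarith) n
  have h2 : (1 : ℝ) + (n : ℝ) * (-d) ≤ (1 - d) ^ n := by
    have : (1 : ℝ) + -d = 1 - d := by ring
    rw [← this]
    exact h
  nlinarith

lemma amp_bound {d ε : ℝ} {n : ℕ} (hn : 0 < n) (h0 : 0 ≤ d) (h1 : d ≤ 1)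
    (hd : d ≤ ε / n) : 1 - (1 - d) ^ n ≤ ε := by
  have hb := one_sub_pow_le_nmul n h0 h1
  have hn' : (0:ℝ) < (n:ℝ) := by exact_mod_cast hn
  have h2 : (n:ℝ) * d ≤ (n:ℝ) * (ε / n) := by nlinarith
  have h3 : (n:ℝ) * (ε / n) = ε := by field_simp
  linarith

theorem sofic3_embeds_into_sofic_group {M : Type u} [Monoid M] (hM : IsSofic3 M) :
    ∃ (G : Type u) (_ : Group G) (f : M → G),
      Function.Injective f ∧ (∀ a b : M, f (a * b) = f a * f b) ∧ IsSoficGroup G := by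
  classical
  have hW : ∀ i : Finset M × ℕ, ∃ X : Type, Finite X ∧ Nonempty X ∧
      ∃ ψ : M → X → X, IsKEAction i.1 (1 / (i.2 + 1)) ψ ∧
      ∀ s ∈ i.1, ∀ E : Set X, |(E.ncard : ℝ) - ((ψ s ⁻¹' E).ncard : ℝ)|
        ≤ (1 / (i.2 + 1)) * (Nat.card X : ℝ) :=
    fun i => hM i.1 (1 / (i.2 + 1)) (by positivity)
  choose X hfin hne ψ hact hmeas using hW
  have hexσ : ∀ i : Finset M × ℕ, ∀ s : M,
      ∃ σ : Equiv.Perm (X i), s ∈ i.1 → dHam (ψ i s) ⇑σ ≤ 1 / (i.2 + 1) := by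
    intro i s
    haveI := hfin i; haveI := hne i
    by_cases h : s ∈ i.1
    · obtain ⟨σ, hσ⟩ := exists_perm_close (ψ i s) (hmeas i s h)
      exact ⟨σ, fun _ => hσ⟩
    · exact ⟨1, fun h' => absurd h' h⟩
  choose σ hσ using hexσ
  haveI : Nonempty (Finset M × ℕ) := ⟨(∅, 0)⟩
  let U : Ultrafilter (Finset M × ℕ) := Ultrafilter.of Filter.atTop
  have hU : ∀ (F : Finset M) (m : ℕ),
      ∀ᶠ i in (U : Filter (Finset M × ℕ)), F ⊆ i.1 ∧ m ≤ i.2 := by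
    intro F m
    have h := Filter.mem_atTop ((F, m) : Finset M × ℕ)
    have h2 : {i : Finset M × ℕ | (F, m) ≤ i} ∈ (U : Filter (Finset M × ℕ)) :=
      Filter.le_def.mp (Ultrafilter.of_le Filter.atTop) _ h
    apply Filter.mem_of_superset h2
    rintro ⟨K0, n0⟩ hi
    exact ⟨hi.1, hi.2⟩
  have hεle : ∀ (m : ℕ) (i : Finset M × ℕ), m ≤ i.2 →
      (1:ℝ) / (i.2 + 1) ≤ 1 / (m + 1) := by
    intro m i h
    apply one_div_le_one_div_of_le (by positivity)
    have : (m:ℝ) ≤ (i.2 : ℝ) := by exact_mod_cast h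
    linarith
  -- the group
  let P := ∀ i : Finset M × ℕ, Equiv.Perm (X i)
  let N : Subgroup P :=
    { carrier := {g : P | ∀ ε : ℝ, 0 < ε →
        ∀ᶠ i in (U : Filter (Finset M × ℕ)), dHam ⇑(g i) id ≤ ε}
      one_mem' := by
        intro ε hε
        apply Filter.Eventually.of_forall
        intro i
        haveI := hfin i
        have h1 : (⇑((1:P) i) : X i → X i) = id := rfl
        rw [h1, dHam_self]
        exact hε.le
      mul_mem' := by
        intro a b ha hb ε hε
        filter_upwards [ha (ε/2) (by linarith), hb (ε/2) (by linarith)] with i h1 h2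
        haveI := hfin i
        have hco : dHam ⇑((a*b) i) id ≤ dHam ⇑(a i) id + dHam ⇑(b i) id :=
          dHam_perm_mul (a i) (b i)
        linarith
      inv_mem' := by
        intro a ha ε hε
        filter_upwards [ha ε hε] with i h1
        haveI := hfin i
        have hco : dHam ⇑((a⁻¹ : P) i) id = dHam ⇑(a i) id := dHam_perm_inv (a i)
        rw [hco]
        exact h1 }
  have hmemN : ∀ g : P, g ∈ N ↔ ∀ ε : ℝ, 0 < ε →
      ∀ᶠ i in (U : Filter (Finset M × ℕ)), dHam ⇑(g i) id ≤ ε := fun g => Iff.rfl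
  have hN : N.Normal := by
    constructor
    intro nn hnn g
    rw [hmemN] at hnn ⊢
    intro ε hε
    filter_upwards [hnn ε hε] with i h1
    haveI := hfin i
    have hco : dHam ⇑((g * nn * g⁻¹ : P) i) id = dHam ⇑(nn i) id :=
      dHam_perm_conj (g i) (nn i)
    rw [hco]
    exact h1
  haveI := hN
  -- key characterization of equality in the quotient
  have hmk : ∀ a b : P, (QuotientGroup.mk a : P ⧸ N) = QuotientGroup.mk b ↔
      (∀ ε : ℝ, 0 < ε → ∀ᶠ i in (U : Filter (Finset M × ℕ)),
        dHam ⇑(a i) ⇑(b i) ≤ ε) := by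
    intro a b
    rw [QuotientGroup.eq, hmemN]
    have key : ∀ i, dHam ⇑((a⁻¹ * b : P) i) id = dHam ⇑(a i) ⇑(b i) := by
      intro i
      haveI := hfin i
      exact dHam_inv_mul ((a i)) ((b i))
    constructor
    · intro h ε hε
      filter_upwards [h ε hε] with i hi
      rwa [key i] at hi
    · intro h ε hε
      filter_upwards [h ε hε] with i hi
      rwa [key i]
  refine ⟨P ⧸ N, inferInstance, fun s => QuotientGroup.mk (fun i => σ i s), ?_, ?_, ?_⟩
  · -- injectivity
    intro a b hab
    by_contra hne'
    rw [hmk] at hab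
    have h14 := hab (1/4) (by norm_num)
    have hfar : ∀ᶠ i in (U : Filter (Finset M × ℕ)),
        (1:ℝ)/2 ≤ dHam ⇑(σ i a) ⇑(σ i b) := by
      filter_upwards [hU {a, b} 5] with i hi
      obtain ⟨hsub, hm2⟩ := hi
      haveI := hfin i; haveI := hne i
      have ha : a ∈ i.1 := hsub (by simp)
      have hb : b ∈ i.1 := hsub (by simp)
      have hsep' := (hact i).2.2 a ha b hb hne'
      have h1 := hσ i a ha
      have h2 := hσ i b hb
      have htri1 := dHam_triangle (ψ i a) ⇑(σ i a) (ψ i b)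
      have htri2 := dHam_triangle ⇑(σ i a) ⇑(σ i b) (ψ i b)
      have hsym1 : dHam ⇑(σ i a) (ψ i a) = dHam (ψ i a) ⇑(σ i a) := dHam_comm _ _
      have hsym2 : dHam (ψ i b) ⇑(σ i b) = dHam ⇑(σ i b) (ψ i b) := dHam_comm _ _
      have he : (1:ℝ)/(i.2+1) ≤ 1/6 := by
        have := hεle 5 i hm2
        norm_num at this ⊢
        linarith
      -- d(ψa,ψb) ≤ d(ψa,σa) + d(σa,ψb) ≤ d(ψa,σa) + d(σa,σb) + d(σb,ψb)
      have htri3 := dHam_triangle (ψ i a) ⇑(σ i a) (ψ i b)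
      have htri4 := dHam_triangle ⇑(σ i a) ⇑(σ i b) (ψ i b)
      linarith
    obtain ⟨i, hi1, hi2⟩ := (h14.and hfar).exists
    linarith
  · -- multiplicativity
    intro a b
    rw [← QuotientGroup.mk_mul, hmk]
    intro ε' hε'
    obtain ⟨m, hm⟩ := exists_nat_gt (5 / ε')
    have hm' : (5:ℝ)/(m+1) < ε' := by
      rw [div_lt_iff₀ (by positivity)]
      rw [div_lt_iff₀ hε'] at hm
      nlinarith
    filter_upwards [hU {a, b, a*b} m] with i hi
    obtain ⟨hsub, hm2⟩ := hi
    haveI := hfin i; haveI := hne i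
    have ha : a ∈ i.1 := hsub (by simp)
    have hb : b ∈ i.1 := hsub (by simp)
    have hab : a*b ∈ i.1 := hsub (by simp)
    have hεi : (1:ℝ)/(i.2+1) ≤ 1/(m+1) := hεle m i hm2
    have t1 : dHam ⇑(σ i (a*b)) (ψ i (a*b)) ≤ 1/(i.2+1) := by
      rw [dHam_comm]; exact hσ i (a*b) hab
    have t2 : dHam (ψ i (a*b)) (fun x => ψ i a (ψ i b x)) ≤ 1/(i.2+1) :=
      (hact i).1 a ha b hb hab
    have t3 : dHam (fun x => ψ i a (ψ i b x)) (fun x => σ i a (ψ i b x))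
        ≤ 1/(i.2+1) + 1/(i.2+1) := by
      have hh := dHam_comp_right_meas (ψ i b) (ψ i a) ⇑(σ i a) (hmeas i b hb)
      have h4 := hσ i a ha
      linarith
    have t4 : dHam (fun x => σ i a (ψ i b x)) (fun x => σ i a (σ i b x))
        ≤ 1/(i.2+1) := by
      have hh := dHam_comp_left ⇑(σ i a) (ψ i b) ⇑(σ i b)
      exact hh.trans (hσ i b hb)
    have htri1 := dHam_triangle ⇑(σ i (a*b)) (ψ i (a*b)) (fun x => σ i a (σ i b x))
    have htri2 := dHam_triangle (ψ i (a*b)) (fun x => ψ i a (ψ i b x))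
      (fun x => σ i a (σ i b x))
    have htri3 := dHam_triangle (fun x => ψ i a (ψ i b x)) (fun x => σ i a (ψ i b x))
      (fun x => σ i a (σ i b x))
    have hfinal : dHam ⇑(σ i (a*b)) (fun x => σ i a (σ i b x)) ≤ 5 * (1/(i.2+1)) := by
      linarith
    have hgoal : dHam ⇑(σ i (a*b)) ⇑(σ i a * σ i b) ≤ 5 * (1/(i.2+1)) := hfinal
    calc dHam ⇑(σ i (a*b)) ⇑(((fun j => σ j a) * (fun j => σ j b) : P) i)
        = dHam ⇑(σ i (a*b)) ⇑(σ i a * σ i b) := rfl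
      _ ≤ 5 * (1/(i.2+1)) := hgoal
      _ ≤ 5 * (1/(m+1)) := by linarith
      _ = 5/(m+1) := by ring
      _ ≤ ε' := hm'.le
  · -- soficity
    intro K ε hε
    set r : (P ⧸ N) → P := fun g => Quotient.out g with hrdef
    have hrmk : ∀ g : P ⧸ N, (QuotientGroup.mk (r g) : P ⧸ N) = g :=
      fun g => QuotientGroup.out_eq' g
    set Q : Finset ((P ⧸ N) × (P ⧸ N)) := (K ×ˢ K).filter (fun p => p.1 ≠ p.2) with hQdef
    have hQsep : ∀ p : (P ⧸ N) × (P ⧸ N), ∃ δ : ℝ, (0 < δ ∧ δ ≤ 1) ∧ (p ∈ Q →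
        ∀ᶠ i in (U : Filter (Finset M × ℕ)), δ ≤ dHam ⇑(r p.1 i) ⇑(r p.2 i)) := by
      intro p
      by_cases hp : p ∈ Q
      · have hne' : p.1 ≠ p.2 := (Finset.mem_filter.mp hp).2
        have hne2 : ¬ ((QuotientGroup.mk (r p.1) : P ⧸ N) = QuotientGroup.mk (r p.2)) := by
          rw [hrmk, hrmk]; exact hne'
        rw [hmk] at hne2
        push_neg at hne2
        obtain ⟨δ0, hδ0, hnotev⟩ := hne2
        refine ⟨min δ0 1, ⟨lt_min hδ0 one_pos, min_le_right _ _⟩, fun _ => ?_⟩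
        have hcompl : {i : Finset M × ℕ | dHam ⇑(r p.1 i) ⇑(r p.2 i) ≤ δ0}ᶜ ∈ U := by
          rw [Ultrafilter.compl_mem_iff_notMem]
          intro hle
          have hle' : ∀ᶠ i in (U : Filter (Finset M × ℕ)), dHam ⇑(r p.1 i) ⇑(r p.2 i) ≤ δ0 := hle
          obtain ⟨i, h1, h2⟩ := (hle'.and hnotev).exists
          linarith
        apply Filter.mem_of_superset hcompl
        intro i hi
        simp only [Set.mem_compl_iff, Set.mem_setOf_eq, not_le] at hi
        exact le_trans (min_le_left δ0 1) hi.le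
      · exact ⟨1, ⟨one_pos, le_refl 1⟩, fun h => absurd h hp⟩
    choose δ hδb hδsep using hQsep
    have hnex : ∀ p : (P ⧸ N) × (P ⧸ N), ∃ n : ℕ, (1 - δ p) ^ n < ε :=
      fun p => exists_pow_lt_of_lt_one hε (by linarith [(hδb p).1])
    choose np hnp using hnex
    set n : ℕ := Q.sup np + 1 with hndef
    have hnpos : 0 < n := Nat.succ_pos _
    have hnR : (0:ℝ) < (n:ℝ) := by exact_mod_cast hnpos
    have hεn : (0:ℝ) < ε / n := div_pos hε hnR
    -- eventual multiplicativity
    have hmul : ∀ᶠ i in (U : Filter (Finset M × ℕ)), ∀ s ∈ K, ∀ t ∈ K, s * t ∈ K →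
        dHam ⇑(r (s*t) i) ⇑(r s i * r t i) ≤ ε / n := by
      rw [Filter.eventually_all_finset]
      intro s hs
      rw [Filter.eventually_all_finset]
      intro t ht
      by_cases hst : s * t ∈ K
      · have heq : (QuotientGroup.mk (r (s*t)) : P ⧸ N) = QuotientGroup.mk (r s * r t) := by
          rw [hrmk, QuotientGroup.mk_mul, hrmk, hrmk]
        rw [hmk] at heq
        filter_upwards [heq (ε/n) hεn] with i hi
        intro _
        exact hi
      · exact Filter.Eventually.of_forall (fun i h => absurd h hst)
    -- eventual identity
    have hone : ∀ᶠ i in (U : Filter (Finset M × ℕ)),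
        ((1 : P ⧸ N) ∈ K → dHam ⇑(r 1 i) (id : X i → X i) ≤ ε / n) := by
      by_cases h1 : (1 : P ⧸ N) ∈ K
      · have heq : (QuotientGroup.mk (r 1) : P ⧸ N) = QuotientGroup.mk (1 : P) := by
          rw [hrmk, QuotientGroup.mk_one]
        rw [hmk] at heq
        filter_upwards [heq (ε/n) hεn] with i hi
        intro _
        exact hi
      · exact Filter.Eventually.of_forall (fun i h => absurd h h1)
    -- eventual separation
    have hsep : ∀ᶠ i in (U : Filter (Finset M × ℕ)),
        ∀ p ∈ Q, δ p ≤ dHam ⇑(r p.1 i) ⇑(r p.2 i) := by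
      rw [Filter.eventually_all_finset]
      intro p hp
      exact hδsep p hp
    obtain ⟨i₀, hi₀sep, hi₀mul, hi₀one⟩ := (hsep.and (hmul.and hone)).exists
    haveI := hfin i₀; haveI := hne i₀
    refine ⟨Fin n → X i₀, inferInstance, inferInstance,
      fun g => fun v => ⇑(r g i₀) ∘ v, ?_, ?_, ?_⟩
    · -- approximate multiplicativity
      intro s hs t ht hst
      show dHam (fun v : Fin n → X i₀ => ⇑(r (s*t) i₀) ∘ v)
        ((fun v : Fin n → X i₀ => ⇑(r s i₀) ∘ v) ∘ (fun v : Fin n → X i₀ => ⇑(r t i₀) ∘ v)) ≤ ε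
      have hshow : dHam (fun v : Fin n → X i₀ => ⇑(r (s*t) i₀) ∘ v)
          (fun v : Fin n → X i₀ => (⇑(r s i₀) ∘ ⇑(r t i₀)) ∘ v) ≤ ε := by
        rw [dHam_pi]
        have hd : dHam ⇑(r (s*t) i₀) (⇑(r s i₀) ∘ ⇑(r t i₀)) ≤ ε / n := by
          have hh := hi₀mul s hs t ht hst
          rwa [Equiv.Perm.coe_mul] at hh
        exact amp_bound hnpos (dHam_nonneg _ _) (dHam_le_one _ _) hd
      exact hshow
    · -- identity
      intro h1K
      show dHam (fun v : Fin n → X i₀ => ⇑(r 1 i₀) ∘ v) id ≤ ε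
      have hid : (id : (Fin n → X i₀) → (Fin n → X i₀))
          = fun v : Fin n → X i₀ => (id : X i₀ → X i₀) ∘ v := rfl
      rw [hid, dHam_pi]
      exact amp_bound hnpos (dHam_nonneg _ _) (dHam_le_one _ _) (hi₀one h1K)
    · -- separation
      intro s hs t ht hst
      have hpQ : (s, t) ∈ Q := by
        rw [hQdef, Finset.mem_filter]
        exact ⟨Finset.mem_product.mpr ⟨hs, ht⟩, hst⟩
      have hδi := hi₀sep (s, t) hpQ
      show 1 - ε ≤ dHam (fun v : Fin n → X i₀ => ⇑(r s i₀) ∘ v)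
        (fun v : Fin n → X i₀ => ⇑(r t i₀) ∘ v)
      rw [dHam_pi]
      have h0 : 0 ≤ 1 - dHam ⇑(r s i₀) ⇑(r t i₀) := by
        linarith [dHam_le_one ⇑(r s i₀) ⇑(r t i₀)]
      have hb1 := (hδb (s, t)).1
      have hb2 := (hδb (s, t)).2
      have hmono1 : (1 - dHam ⇑(r s i₀) ⇑(r t i₀)) ^ n ≤ (1 - δ (s, t)) ^ n :=
        pow_le_pow_left₀ h0 (by linarith) n
      have hmono2 : (1 - δ (s, t)) ^ n ≤ (1 - δ (s, t)) ^ (np (s, t)) :=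
        pow_le_pow_of_le_one (by linarith) (by linarith)
          (le_trans (Finset.le_sup hpQ) (Nat.le_succ _))
      have hfin' := hnp (s, t)
      linarith
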